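/- Let g be a finite-dimensional perfect Lie algebra over a field of characteristic ≠ 2 which is taut (every Lie algebra homomorphism g → Der(g) maps g into Inn(g)). Then every CPA-structure on g is trivial: x·y = 0 for all x,y ∈ g. -/
import Mathlib


/-- A finite-dimensional perfect taut Lie algebra over a field of characteristic ≠ 2
admits only the trivial CPA-structure. -/
theorem perfect_taut_cpa_trivial
    (K : Type*) [Field K] (h2 : (2 : K) ≠ 0)
    (L : Type*) [LieRing L] [LieAlgebra K L] [FiniteDimensional K L]
    (hperf : LieAlgebra.derivedSeries K L 1 = ⊤)
    (htaut : ∀ (f : L →ₗ⁅K⁆ LieDerivation K L L) (x : L),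
      ∃ y : L, f x = LieDerivation.ad K L y)
    (mul : L →ₗ[K] L →ₗ[K] L)
    (hcomm : ∀ x y : L, mul x y = mul y x)
    (hpost : ∀ x y z : L, mul ⁅x, y⁆ z = mul x (mul y z) - mul y (mul x z))
    (hder : ∀ x y z : L, mul x ⁅y, z⁆ = ⁅mul x y, z⁆ + ⁅y, mul x z⁆) :
    ∀ x y : L, mul x y = 0 := by
  classical
  -- skew-symmetry helper
  have skw : ∀ u v : L, ⁅u, v⁆ = -⁅v, u⁆ := fun u v => by rw [← lie_skew]
  -- the map x ↦ mul x is a Lie algebra homomorphism into derivations;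
  -- tautness gives a (nonlinear) choice function φ with mul x w = ⁅φ x, w⁆.
  have key : ∀ x : L, ∃ y : L, ∀ w : L, mul x w = ⁅y, w⁆ := by
    intro x
    let f : L →ₗ⁅K⁆ LieDerivation K L L :=
      { toFun := fun x =>
          { toLinearMap := mul x
            leibniz' := fun a b => by
              have := hder x a b
              rw [this, skw (mul x a) b]
              abel }
        map_add' := fun x y => by
          apply LieDerivation.ext; intro z
          simp
        map_smul' := fun c x => by
          apply LieDerivation.ext; intro z
          simp
        map_lie' := by
          intro x y
          apply LieDerivation.ext; intro z
          have := hpost x y z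
          simpa [LieDerivation.commutator_apply] using this }
    obtain ⟨y, hy⟩ := htaut f x
    refine ⟨y, fun w => ?_⟩
    have h := LieDerivation.congr_fun hy w
    have h2 : (f x) w = mul x w := rfl
    rw [h2] at h
    rw [h]
    simp
  choose φ hA using key
  -- basic identities
  have s2 : ∀ x y : L, mul x y = -⁅x, φ y⁆ := fun x y => by
    rw [hcomm x y, hA y x, skw]
  have s4 : ∀ x y : L, ⁅φ x, φ y⁆ = -⁅x, φ (φ y)⁆ := fun x y => by
    rw [← hA x (φ y)]; exact s2 x (φ y)
  have s5 : ∀ a b w : L, mul ⁅a, b⁆ w = ⁅⁅φ a, φ b⁆, w⁆ := fun a b w => by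
    rw [hpost a b w, hA b w, hA a ⁅φ b, w⁆, hA a w, hA b ⁅φ a, w⁆, lie_lie]
  have club : ∀ a b w : L, mul ⁅a, b⁆ w = -⁅⁅a, φ (φ b)⁆, w⁆ := fun a b w => by
    rw [s5, s4, neg_lie]
  -- congruence: equal adjoints give equal left-multiplications
  have cong : ∀ p q : L, (∀ v : L, ⁅p, v⁆ = ⁅q, v⁆) → ∀ w, mul p w = mul q w := by
    intro p q h w
    calc mul p w = ⁅φ w, p⁆ := by rw [hcomm p w, hA w p]
      _ = -⁅p, φ w⁆ := by rw [skw]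
      _ = -⁅q, φ w⁆ := by rw [h]
      _ = ⁅φ w, q⁆ := by rw [← skw]
      _ = mul q w := by rw [← hA w q, hcomm w q]
  have slot2 : ∀ a p q : L, (∀ v : L, ⁅p, v⁆ = ⁅q, v⁆) → ⁅a, p⁆ = ⁅a, q⁆ := by
    intro a p q h
    rw [skw a p, h, ← skw]
  -- span induction principle from perfectness
  have span_ind : ∀ p : L → Prop, p 0 → (∀ a b : L, p ⁅a, b⁆) →
      (∀ u v : L, p u → p v → p (u + v)) → (∀ (c : K) (u : L), p u → p (c • u)) →
      ∀ x : L, p x := by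
    intro p h0 hbr hadd hsmul x
    have hx : x ∈ LieAlgebra.derivedSeries K L 1 := by rw [hperf]; exact LieSubmodule.mem_top x
    rw [LieAlgebra.derivedSeries_def, LieAlgebra.derivedSeriesOfIdeal_succ,
      LieAlgebra.derivedSeriesOfIdeal_zero] at hx
    have hx' : x ∈ Submodule.span K
        {m : L | ∃ (a : (⊤ : LieIdeal K L)) (b : (⊤ : LieIdeal K L)), ⁅(a : L), (b : L)⁆ = m} := by
      rw [← LieSubmodule.lieIdeal_oper_eq_linear_span]
      exact hx
    refine Submodule.span_induction ?_ h0 (fun u v _ _ hu hv => hadd u v hu hv)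
      (fun c u _ hu => hsmul c u hu) hx'
    rintro m ⟨a, b, rfl⟩
    exact hbr a b
  -- the key trilinear identity
  have T : ∀ a b w : L, mul a (mul b w) = -⁅a, ⁅b, φ (φ (φ w))⁆⁆ := by
    intro a b w
    rw [s2 b w, map_neg (mul a), s2 a ⁅b, φ w⁆, neg_neg]
    have h1 : ∀ v : L, ⁅φ ⁅b, φ w⁆, v⁆ = ⁅⁅φ b, φ (φ w)⁆, v⁆ := fun v => by
      rw [← hA]; exact s5 b (φ w) v
    rw [slot2 a _ _ h1, s4 b (φ w), lie_neg]
  have s7 : ∀ a b w : L, ⁅⁅a, b⁆, φ (φ (φ w))⁆ = ⁅⁅a, b⁆, φ w⁆ := by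
    intro a b w
    have e1 : mul ⁅a, b⁆ w = -⁅⁅a, b⁆, φ w⁆ := s2 _ w
    have e2 : mul ⁅a, b⁆ w = -⁅⁅a, b⁆, φ (φ (φ w))⁆ := by
      rw [hpost a b w, T a b w, T b a w, lie_lie]
      abel
    have h := e1.symm.trans e2
    exact (neg_injective h).symm
  have s8 : ∀ x w : L, ⁅x, φ (φ (φ w))⁆ = ⁅x, φ w⁆ := by
    refine span_ind (fun x => ∀ w, ⁅x, φ (φ (φ w))⁆ = ⁅x, φ w⁆) (by simp) s7 ?_ ?_
    · intro u v hu hv w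
      rw [add_lie, add_lie, hu, hv]
    · intro c u hu w
      rw [smul_lie, smul_lie, hu]
  -- "P² = -P" : mul (φ u) = - mul u
  have s11 : ∀ u w : L, mul (φ u) w = -(mul u w) := by
    refine span_ind (fun u => ∀ w, mul (φ u) w = -(mul u w)) ?_ ?_ ?_ ?_
    · intro w
      have h : ∀ v : L, ⁅φ (0 : L), v⁆ = ⁅(0 : L), v⁆ := fun v => by
        rw [← hA]; simp
      rw [cong _ _ h w]; simp
    · intro a b w
      have h : ∀ v : L, ⁅φ ⁅a, b⁆, v⁆ = ⁅-⁅a, φ (φ b)⁆, v⁆ := fun v => by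
        rw [← hA, club, neg_lie]
      rw [cong _ _ h w, map_neg mul, LinearMap.neg_apply, club a (φ (φ b)) w,
        s8 a (φ b), club a b w]
    · intro u v hu hv w
      have h : ∀ v' : L, ⁅φ (u + v), v'⁆ = ⁅φ u + φ v, v'⁆ := fun v' => by
        rw [← hA, map_add mul, LinearMap.add_apply, hA u, hA v, add_lie]
      rw [cong _ _ h w, map_add mul, LinearMap.add_apply, hu, hv, map_add mul,
        LinearMap.add_apply]
      abel
    · intro c u hu w
      have h : ∀ v' : L, ⁅φ (c • u), v'⁆ = ⁅c • φ u, v'⁆ := fun v' => by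
        rw [← hA, map_smul mul, LinearMap.smul_apply, hA u, smul_lie]
      rw [cong _ _ h w, map_smul mul, LinearMap.smul_apply, hu, map_smul mul,
        LinearMap.smul_apply]
      simp
  have s11' : ∀ u v : L, ⁅φ (φ u), v⁆ = -⁅φ u, v⁆ := fun u v => by
    rw [← hA (φ u) v, s11 u v, hA u v]
  -- conclusion
  have final : ∀ x : L, ∀ w : L, mul x w = 0 := by
    refine span_ind (fun x => ∀ w, mul x w = 0) (by simp) ?_ ?_ ?_
    · intro a b w
      have e1 : mul (φ ⁅a, b⁆) w = -(mul ⁅a, b⁆ w) := s11 _ w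
      have h : ∀ v : L, ⁅φ ⁅a, b⁆, v⁆ = ⁅⁅φ a, φ b⁆, v⁆ := fun v => by
        rw [← hA]; exact s5 a b v
      have e2 : mul (φ ⁅a, b⁆) w = mul ⁅a, b⁆ w := by
        rw [cong _ _ h w, s5 (φ a) (φ b) w, s5 a b w]
        have hab : ⁅φ (φ a), φ (φ b)⁆ = ⁅φ a, φ b⁆ := by
          rw [s11' a (φ (φ b)), skw (φ a) (φ (φ b)), s11' b (φ a), skw (φ b) (φ a)]
          simp
        rw [hab]
      have hm : mul ⁅a, b⁆ w = -(mul ⁅a, b⁆ w) := e2.symm.trans e1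
      have h2m : (2 : K) • mul ⁅a, b⁆ w = 0 := by
        rw [two_smul]
        nth_rewrite 1 [hm]
        simp
      rcases smul_eq_zero.mp h2m with hc | hz
      · exact absurd hc h2
      · exact hz
    · intro u v hu hv w
      rw [map_add mul, LinearMap.add_apply, hu, hv, add_zero]
    · intro c u hu w
      rw [map_smul mul, LinearMap.smul_apply, hu, smul_zero]
  exact final
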